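/- arXiv:1912.11397 — 3 statements merged into one kernel-verified Lean document; each statement's English description precedes it below -/
import Mathlib

section
/- Let C be a (d+2)-angulated category and A_0 → A_1 → ⋯ → A_{d-1} → L ⊕ M → N → Σ^d A_0 a (d+2)-angle in which the component A_{d-1} → L of the map A_{d-1} → L ⊕ M is zero. Then the component map L → N of L ⊕ M → N is a split monomorphism. -/
open CategoryTheory CategoryTheory.Limits ZeroObject

universe v u

variable (C : Type u) [Category.{v} C]

/-- A `(d+2)`-`Σᵈ`-sequence: objects `A₀, …, A_{d+1}` with morphisms between consecutive
ones and a connecting morphism `A_{d+1} ⟶ Σᵈ A₀`. -/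
structure DAngle (S : C ≌ C) (d : ℕ) where
  obj : Fin (d + 2) → C
  mor : ∀ i : Fin (d + 1), obj i.castSucc ⟶ obj i.succ
  conn : obj ⟨d + 1, Nat.lt_succ_self _⟩ ⟶ S.functor.obj (obj ⟨0, Nat.succ_pos _⟩)

attribute [local instance] CategoryTheory.Limits.hasBinaryBiproducts_of_finite_biproducts

variable {C}

namespace DAngle

variable {S : C ≌ C} {d : ℕ}

/-- Morphisms of `(d+2)`-`Σᵈ`-sequences. -/
structure Hom (A B : DAngle C S d) where
  hom : ∀ i : Fin (d + 2), A.obj i ⟶ B.obj i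
  comm : ∀ i : Fin (d + 1), A.mor i ≫ hom i.succ = hom i.castSucc ≫ B.mor i
  comm_conn : A.conn ≫ S.functor.map (hom ⟨0, Nat.succ_pos _⟩) =
      hom ⟨d + 1, Nat.lt_succ_self _⟩ ≫ B.conn

/-- A morphism of `(d+2)`-`Σᵈ`-sequences is an isomorphism if all its components are. -/
def Hom.IsIso {A B : DAngle C S d} (f : Hom A B) : Prop :=
  ∀ i : Fin (d + 2), CategoryTheory.IsIso (f.hom i)

/-- The extended object sequence of a `(d+2)`-`Σᵈ`-sequence, with `Σᵈ A₀` appended. -/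
noncomputable def objS (A : DAngle C S d) : Fin (d + 3) → C :=
  Fin.snoc A.obj (S.functor.obj (A.obj ⟨0, Nat.succ_pos _⟩))

lemma objS_eq_of_lt (A : DAngle C S d) (i : Fin (d + 3)) (h : (i : ℕ) < d + 2) :
    A.objS i = A.obj ⟨i, h⟩ := by
  rcases i with ⟨i, hi⟩
  simp [objS, Fin.snoc, h]

lemma objS_eq_of_eq (A : DAngle C S d) (i : Fin (d + 3)) (h : (i : ℕ) = d + 2) :
    A.objS i = S.functor.obj (A.obj ⟨0, Nat.succ_pos _⟩) := by
  rcases i with ⟨i, hi⟩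
  subst h
  simp [objS, Fin.snoc]

/-- The extended morphism sequence, the last morphism being the connecting morphism. -/
noncomputable def morS (A : DAngle C S d) (i : Fin (d + 2)) : A.objS i.castSucc ⟶ A.objS i.succ :=
  if h : (i : ℕ) < d + 1 then
    eqToHom (A.objS_eq_of_lt i.castSucc (by simp only [Fin.coe_castSucc]; omega)) ≫
      A.mor ⟨(i : ℕ), h⟩ ≫
      eqToHom (A.objS_eq_of_lt i.succ (by simp only [Fin.val_succ]; omega)).symm
  else
    eqToHom (by
      rw [A.objS_eq_of_lt i.castSucc (by simp only [Fin.coe_castSucc]; omega)]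
      congr 1
      ext
      simp only [Fin.coe_castSucc]
      omega) ≫ A.conn ≫
      eqToHom (A.objS_eq_of_eq i.succ (by simp only [Fin.val_succ]; omega)).symm

variable [Preadditive C]

/-- The left rotation of a `(d+2)`-`Σᵈ`-sequence. -/
noncomputable def rotate (A : DAngle C S d) : DAngle C S d where
  obj i := A.objS i.succ
  mor i := A.morS i.succ
  conn :=
    eqToHom (A.objS_eq_of_eq (Fin.succ ⟨d + 1, Nat.lt_succ_self _⟩) (by simp only [Fin.val_succ])) ≫
      (((-1 : ℤ) ^ d) • S.functor.map (A.mor ⟨0, Nat.succ_pos _⟩)) ≫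
      eqToHom (congrArg S.functor.obj
        (A.objS_eq_of_lt (Fin.succ ⟨0, Nat.succ_pos _⟩) (by simp only [Fin.val_succ]; omega)).symm)

variable [HasZeroObject C] [HasFiniteBiproducts C]

/-- The direct sum of two `(d+2)`-`Σᵈ`-sequences. -/
noncomputable def sum (A B : DAngle C S d) : DAngle C S d where
  obj i := A.obj i ⊞ B.obj i
  mor i := biprod.map (A.mor i) (B.mor i)
  conn := biprod.desc (A.conn ≫ S.functor.map biprod.inl) (B.conn ≫ S.functor.map biprod.inr)

/-- The trivial `(d+2)`-`Σᵈ`-sequence `X = X → 0 → ⋯ → 0 → Σᵈ X` on an object `X`. -/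
noncomputable def trivial (S : C ≌ C) (d : ℕ) (X : C) : DAngle C S d where
  obj i := if (i : ℕ) ≤ 1 then X else 0
  mor i :=
    if h : (i : ℕ) = 0 then
      eqToHom (by simp only [Fin.coe_castSucc, h]; simp) ≫ 𝟙 X ≫
        eqToHom (by simp only [Fin.val_succ, h]; simp)
    else 0
  conn := 0

/-- The mapping cone of a morphism of `(d+2)`-`Σᵈ`-sequences. -/
noncomputable def cone {A B : DAngle C S d} (f : Hom A B) : DAngle C S d where
  obj i := A.objS i.succ ⊞ B.obj i
  mor i :=
    biprod.lift (biprod.fst ≫ (-(A.morS i.succ)))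
      (biprod.fst ≫ (eqToHom (A.objS_eq_of_lt i.succ.castSucc
            (by simp only [Fin.coe_castSucc, Fin.val_succ]; omega)) ≫
          f.hom ⟨(i : ℕ) + 1, by omega⟩) + biprod.snd ≫ B.mor i)
  conn :=
    biprod.desc
      (eqToHom (A.objS_eq_of_eq (Fin.succ ⟨d + 1, Nat.lt_succ_self _⟩)
          (by simp only [Fin.val_succ])) ≫
        S.functor.map
          (biprod.lift
            ((-(A.mor ⟨0, Nat.succ_pos _⟩)) ≫
              eqToHom (A.objS_eq_of_lt (Fin.succ ⟨0, Nat.succ_pos _⟩)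
                (by simp only [Fin.val_succ]; omega)).symm)
            (f.hom ⟨0, Nat.succ_pos _⟩)))
      (B.conn ≫ S.functor.map biprod.inr)

end DAngle

/-- A `(d+2)`-angulated category in the sense of Geiss–Keller–Oppermann: an additive
category `C` together with a `d`-suspension automorphism `S` and a class of distinguished
`(d+2)`-angles satisfying the axioms (N1)–(N4). -/
class DAngulated (C : Type u) [Category.{v} C] [Preadditive C] [HasZeroObject C]
    [HasFiniteBiproducts C] (S : C ≌ C) (d : ℕ) where
  distinguished : Set (DAngle C S d)
  /-- (N1)(a): closure under isomorphisms. -/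
  mem_of_iso : ∀ {A B : DAngle C S d} (f : DAngle.Hom A B), f.IsIso →
      A ∈ distinguished → B ∈ distinguished
  /-- (N1)(a): closure under direct sums. -/
  sum_mem : ∀ {A B : DAngle C S d}, A ∈ distinguished → B ∈ distinguished →
      A.sum B ∈ distinguished
  /-- (N1)(a): closure under direct summands. -/
  mem_of_sum_mem : ∀ {A B : DAngle C S d}, A.sum B ∈ distinguished → A ∈ distinguished
  /-- (N1)(b): the trivial angles are distinguished. -/
  trivial_mem : ∀ X : C, DAngle.trivial S d X ∈ distinguished
  /-- (N1)(c): every morphism extends to a distinguished angle. -/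
  extend : ∀ {X Y : C} (f : X ⟶ Y), ∃ A ∈ distinguished,
      ∃ (h0 : A.obj ⟨0, Nat.succ_pos _⟩ = X) (h1 : A.obj ⟨1, by omega⟩ = Y),
        A.mor ⟨0, Nat.succ_pos _⟩ = eqToHom h0 ≫ f ≫ eqToHom h1.symm
  /-- (N2): rotation. -/
  rotate_mem_iff : ∀ A : DAngle C S d, A ∈ distinguished ↔ A.rotate ∈ distinguished
  /-- (N3): completion of commutative squares to morphisms of angles. -/
  complete : ∀ {A B : DAngle C S d}, A ∈ distinguished → B ∈ distinguished →
      ∀ (φ₀ : A.obj ⟨0, Nat.succ_pos _⟩ ⟶ B.obj ⟨0, Nat.succ_pos _⟩)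
        (φ₁ : A.obj ⟨1, by omega⟩ ⟶ B.obj ⟨1, by omega⟩),
        A.mor ⟨0, Nat.succ_pos _⟩ ≫ φ₁ = φ₀ ≫ B.mor ⟨0, Nat.succ_pos _⟩ →
        ∃ f : DAngle.Hom A B, f.hom ⟨0, Nat.succ_pos _⟩ = φ₀ ∧ f.hom ⟨1, by omega⟩ = φ₁
  /-- (N4): the completion can be chosen so that the mapping cone is distinguished. -/
  cone_mem : ∀ {A B : DAngle C S d}, A ∈ distinguished → B ∈ distinguished →
      ∀ (φ₀ : A.obj ⟨0, Nat.succ_pos _⟩ ⟶ B.obj ⟨0, Nat.succ_pos _⟩)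
        (φ₁ : A.obj ⟨1, by omega⟩ ⟶ B.obj ⟨1, by omega⟩),
        A.mor ⟨0, Nat.succ_pos _⟩ ≫ φ₁ = φ₀ ≫ B.mor ⟨0, Nat.succ_pos _⟩ →
        ∃ f : DAngle.Hom A B, f.hom ⟨0, Nat.succ_pos _⟩ = φ₀ ∧ f.hom ⟨1, by omega⟩ = φ₁ ∧
          DAngle.cone f ∈ distinguished

namespace DAngle

variable {n : ℕ} [Preadditive C] [HasZeroObject C] [HasFiniteBiproducts C]

/-- The object sequence `X₀, …, X_n, P, Q` of length `n + 3`. -/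
noncomputable def mkObj (X : Fin (n + 1) → C) (P Q : C) : Fin (n + 3) → C :=
  Fin.snoc (Fin.snoc X P) Q

lemma mkObj_lt (X : Fin (n + 1) → C) (P Q : C) (j : Fin (n + 3)) (h : (j : ℕ) < n + 1) :
    mkObj X P Q j = X ⟨j, h⟩ := by
  rcases j with ⟨j, hj⟩
  replace h : j < n + 1 := h
  have h2 : j < n + 2 := by omega
  simp [mkObj, Fin.snoc, h, h2]

lemma mkObj_mid (X : Fin (n + 1) → C) (P Q : C) (j : Fin (n + 3)) (h : (j : ℕ) = n + 1) :
    mkObj X P Q j = P := by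
  rcases j with ⟨j, hj⟩
  subst h
  simp [mkObj, Fin.snoc]

lemma mkObj_last (X : Fin (n + 1) → C) (P Q : C) (j : Fin (n + 3)) (h : (j : ℕ) = n + 2) :
    mkObj X P Q j = Q := by
  rcases j with ⟨j, hj⟩
  subst h
  simp [mkObj, Fin.snoc]

/-- The `(n+3)`-`Σ`-sequence `X₀ → X₁ → ⋯ → X_n → P → Q → Σ X₀` assembled from its data. -/
noncomputable def mk' (S : C ≌ C) (X : Fin (n + 1) → C)
    (f : ∀ i : Fin n, X i.castSucc ⟶ X i.succ) (P Q : C)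
    (u : X ⟨n, Nat.lt_succ_self _⟩ ⟶ P) (w : P ⟶ Q)
    (z : Q ⟶ S.functor.obj (X ⟨0, Nat.succ_pos _⟩)) : DAngle C S (n + 1) where
  obj := mkObj X P Q
  mor i :=
    if h : (i : ℕ) < n then
      eqToHom (mkObj_lt X P Q i.castSucc (by simp only [Fin.coe_castSucc]; omega)) ≫
        f ⟨(i : ℕ), h⟩ ≫
        eqToHom (mkObj_lt X P Q i.succ (by simp only [Fin.val_succ]; omega)).symm
    else if h2 : (i : ℕ) = n then
      eqToHom (by
        rw [mkObj_lt X P Q i.castSucc (by simp only [Fin.coe_castSucc]; omega)]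
        congr 1
        ext
        simpa using h2) ≫ u ≫
        eqToHom (mkObj_mid X P Q i.succ (by simp only [Fin.val_succ]; omega)).symm
    else
      eqToHom (mkObj_mid X P Q i.castSucc (by simp only [Fin.coe_castSucc]; omega)) ≫ w ≫
        eqToHom (mkObj_last X P Q i.succ (by simp only [Fin.val_succ]; omega)).symm
  conn :=
    eqToHom (mkObj_last X P Q _ rfl) ≫ z ≫
      eqToHom (congrArg S.functor.obj (mkObj_lt X P Q ⟨0, Nat.succ_pos _⟩ (Nat.succ_pos n)).symm)

end DAngle


section Aux

open DAngle

variable {S : C ≌ C} {d : ℕ} [Preadditive C] [HasZeroObject C] [HasFiniteBiproducts C]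

lemma rotate_obj_eq (A : DAngle C S d) (i : ℕ) (h1 : i < d + 2) (h2 : i + 1 < d + 2) :
    A.rotate.obj ⟨i, h1⟩ = A.obj ⟨i + 1, h2⟩ := by
  show A.objS (Fin.succ ⟨i, h1⟩) = _
  exact A.objS_eq_of_lt _ (by simpa using h2)

lemma iter_rotate_obj (A : DAngle C S d) :
    ∀ (k i j : ℕ), i + k = j → ∀ (h1 : i < d + 2) (h : j < d + 2),
      (DAngle.rotate^[k] A).obj ⟨i, h1⟩ = A.obj ⟨j, h⟩ := by
  intro k
  induction k with
  | zero =>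
      intro i j hj h1 h
      subst hj
      rfl
  | succ k ih =>
      intro i j hj h1 h
      rw [Function.iterate_succ_apply']
      rw [rotate_obj_eq _ i h1 (by omega), ih (i + 1) j (by omega) (by omega) h]

lemma rotate_mor_eq (A : DAngle C S d) (i : ℕ) (h1 : i < d + 1) (h2 : i + 1 < d + 1) :
    A.rotate.mor ⟨i, h1⟩ =
      eqToHom (rotate_obj_eq A i (by omega) (by omega)) ≫ A.mor ⟨i + 1, h2⟩ ≫
        eqToHom (rotate_obj_eq A (i + 1) (by omega) (by omega)).symm := by
  show A.morS (Fin.succ ⟨i, h1⟩) = _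
  rw [DAngle.morS, dif_pos (show ((Fin.succ (⟨i, h1⟩ : Fin (d + 1)) : Fin (d + 2)) : ℕ) < d + 1 by
    simpa using h2)]
  rfl

lemma rotate_obj_eq' (A : DAngle C S d) (i j : ℕ) (hj : i + 1 = j) (h1 : i < d + 2)
    (h2 : j < d + 2) : A.rotate.obj ⟨i, h1⟩ = A.obj ⟨j, h2⟩ := by
  subst hj
  exact rotate_obj_eq A i h1 h2

lemma rotate_mor_eq' (A : DAngle C S d) (i j : ℕ) (hj : i + 1 = j) (h1 : i < d + 1)
    (h2 : j < d + 1) :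
    A.rotate.mor ⟨i, h1⟩ =
      eqToHom (rotate_obj_eq' A i j hj (by omega) (by omega)) ≫ A.mor ⟨j, h2⟩ ≫
        eqToHom (rotate_obj_eq' A (i + 1) (j + 1) (by omega) (by omega) (by omega)).symm := by
  subst hj
  exact rotate_mor_eq A i h1 h2

lemma iter_rotate_mor :
    ∀ (k : ℕ) (A : DAngle C S d) (i j : ℕ) (hj : i + k = j) (h1 : i < d + 1) (h : j < d + 1),
      (DAngle.rotate^[k] A).mor ⟨i, h1⟩ =
        eqToHom (iter_rotate_obj A k i j hj (by omega) (by omega)) ≫ A.mor ⟨j, h⟩ ≫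
          eqToHom (iter_rotate_obj A k (i + 1) (j + 1) (by omega) (by omega) (by omega)).symm := by
  intro k
  induction k with
  | zero =>
      intro A i j hj h1 h
      subst hj
      simp only [Function.iterate_zero, id_eq, eqToHom_refl, Category.id_comp, Category.comp_id]
      show A.mor ⟨i, h1⟩ = 𝟙 _ ≫ A.mor ⟨i, h1⟩ ≫ 𝟙 _
      rw [Category.id_comp, Category.comp_id]
  | succ k ih =>
      intro A i j hj h1 h
      have e1 := ih A.rotate i (i + k) rfl h1 (by omega)
      refine Eq.trans e1 ?_
      rw [rotate_mor_eq' A (i + k) j (by omega) (by omega) h]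
      simp [eqToHom_trans, eqToHom_trans_assoc]

lemma iter_rotate_mem [DAngulated C S d] (A : DAngle C S d)
    (hA : A ∈ DAngulated.distinguished (S := S) (d := d)) (k : ℕ) :
    DAngle.rotate^[k] A ∈ DAngulated.distinguished (S := S) (d := d) := by
  induction k with
  | zero => exact hA
  | succ k ih =>
      rw [Function.iterate_succ_apply']
      exact (DAngulated.rotate_mem_iff _).mp ih

/-- The angle `0 → L = L → 0 → ⋯ → 0 → Σᵈ0`. -/
noncomputable def stalk2 (S : C ≌ C) (d : ℕ) (L : C) : DAngle C S d where
  obj i := if (i : ℕ) = 1 ∨ (i : ℕ) = 2 then L else 0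
  mor i :=
    if h : (i : ℕ) = 1 then
      eqToHom (by
        simp only [Fin.coe_castSucc, Fin.val_succ, h]
        norm_num)
    else 0
  conn := 0

lemma isZero_equiv_obj (S : C ≌ C) {X : C} (hX : IsZero X) : IsZero (S.functor.obj X) := by
  constructor
  · intro Y
    obtain ⟨u⟩ := hX.unique_to (S.inverse.obj Y)
    exact ⟨(S.toAdjunction.homEquiv X Y).unique⟩
  · intro Y
    obtain ⟨u⟩ := hX.unique_from (S.symm.functor.obj Y)
    exact ⟨((S.symm.toAdjunction.homEquiv Y X).symm).unique⟩

lemma isIso_of_isZero {X Y : C} (hX : IsZero X) (hY : IsZero Y) (f : X ⟶ Y) : IsIso f :=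
  ⟨⟨hY.to_ X, hX.eq_of_src _ _, hY.eq_of_src _ _⟩⟩

lemma stalk2_obj_eq_of_mem (L : C) (i : ℕ) (h1 : i < d + 2) (h : i = 1 ∨ i = 2) :
    (stalk2 S d L).obj ⟨i, h1⟩ = L := by
  show (if i = 1 ∨ i = 2 then L else 0) = L
  rw [if_pos h]

lemma stalk2_obj_eq_of_not_mem (L : C) (i : ℕ) (h1 : i < d + 2) (h : ¬(i = 1 ∨ i = 2)) :
    (stalk2 S d L).obj ⟨i, h1⟩ = 0 := by
  show (if i = 1 ∨ i = 2 then L else 0) = 0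
  rw [if_neg h]

lemma trivial_to_stalk2_obj (L : C) (i : ℕ) (h1 : i < d + 2) (h2 : i < d + 1) :
    (DAngle.trivial S d L).obj ⟨i, h1⟩ = (stalk2 S d L).rotate.obj ⟨i, h1⟩ := by
  rw [rotate_obj_eq' (stalk2 S d L) i (i + 1) rfl h1 (by omega)]
  show (if i ≤ 1 then L else 0) = (if i + 1 = 1 ∨ i + 1 = 2 then L else 0)
  rcases Nat.lt_or_ge i 2 with hlt | hge
  · interval_cases i <;> norm_num
  · rw [if_neg (by omega), if_neg (by omega)]

/-- The comparison morphism from the trivial angle to the rotated stalk angle. -/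
noncomputable def trivialToStalk2 (hd : 0 < d) (L : C) :
    DAngle.Hom (DAngle.trivial S d L) (stalk2 S d L).rotate where
  hom i := if h : (i : ℕ) < d + 1 then eqToHom (trivial_to_stalk2_obj L i i.isLt h) else 0
  comm := by
    rintro ⟨i, hi⟩
    dsimp only [DAngle.trivial, stalk2, DAngle.rotate]
    rw [DAngle.morS]
    simp only [Fin.val_succ, Fin.coe_castSucc]
    erw [dif_pos (show i < d + 1 from hi)]
    rcases eq_or_ne i 0 with rfl | hi0
    · rw [dif_pos (show 0 + 1 < d + 1 by omega),
        dif_pos (show 0 + 1 = 1 from rfl)]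
      simp [eqToHom_trans]
      erw [dif_pos (show 1 < d + 1 by omega)]
      repeat erw [eqToHom_trans]
    · rw [dif_neg hi0, Limits.zero_comp]
      by_cases hid : i + 1 < d + 1
      · rw [dif_pos hid, dif_neg (show ¬(i + 1 = 1) by omega)]
        simp
      · rw [dif_neg hid]
        simp
        erw [Limits.zero_comp, Limits.comp_zero, Limits.comp_zero]
  comm_conn := by
    dsimp only [DAngle.trivial, stalk2, DAngle.rotate]
    split_ifs <;> first | omega | (simp; erw [Limits.zero_comp, Limits.zero_comp])
lemma trivialToStalk2_isIso (hd : 0 < d) (L : C) :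
    (trivialToStalk2 (S := S) hd L).IsIso := by
  rintro ⟨i, hi⟩
  show IsIso (if h : (i : ℕ) < d + 1 then _ else _)
  by_cases h : i < d + 1
  · rw [dif_pos h]
    infer_instance
  · rw [dif_neg h]
    have hi' : i = d + 1 := by omega
    subst hi'
    refine isIso_of_isZero ?_ ?_ _
    · have : (DAngle.trivial S d L).obj ⟨d + 1, hi⟩ = 0 := by
        show (if d + 1 ≤ 1 then L else 0) = 0
        rw [if_neg (by omega)]
      rw [this]
      exact isZero_zero C
    · have : (stalk2 S d L).rotate.obj ⟨d + 1, hi⟩ =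
          S.functor.obj ((stalk2 S d L).obj ⟨0, Nat.succ_pos _⟩) :=
        (stalk2 S d L).objS_eq_of_eq (Fin.succ ⟨d + 1, hi⟩) (by simp)
      rw [this]
      refine isZero_equiv_obj S ?_
      rw [stalk2_obj_eq_of_not_mem L 0 (by omega) (by omega)]
      exact isZero_zero C

lemma stalk2_mem [DAngulated C S d] (hd : 0 < d) (L : C) :
    stalk2 S d L ∈ DAngulated.distinguished (S := S) (d := d) := by
  rw [DAngulated.rotate_mem_iff]
  exact DAngulated.mem_of_iso (trivialToStalk2 hd L) (trivialToStalk2_isIso hd L)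
    (DAngulated.trivial_mem L)

end Aux

/-- Let `C` be a `(d+2)`-angulated category (here `d = n + 1 ≥ 1`) and
`A₀ → A₁ → ⋯ → A_{d-1} →⁽⁰ᵛ⁾ L ⊞ M →⁽ᶜ ᵈ⁾ N → Σᵈ A₀` a `(d+2)`-angle in which the
component `A_{d-1} ⟶ L` of the map into `L ⊞ M` is zero. Then the component
`c : L ⟶ N` of the map out of `L ⊞ M` is a split monomorphism. -/
theorem component_isSplitMono_of_fst_eq_zero {C : Type u} [Category.{v} C] [Preadditive C]
    [HasZeroObject C] [HasFiniteBiproducts C] {S : C ≌ C} {n : ℕ} [DAngulated C S (n + 1)]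
    (X : Fin (n + 1) → C) (f : ∀ i : Fin n, X i.castSucc ⟶ X i.succ) (L M N : C)
    (v : X ⟨n, Nat.lt_succ_self _⟩ ⟶ M) (c : L ⟶ N) (e : M ⟶ N)
    (h : N ⟶ S.functor.obj (X ⟨0, Nat.succ_pos _⟩))
    (hA : DAngle.mk' S X f (L ⊞ M) N (biprod.lift 0 v) (biprod.desc c e) h ∈
      DAngulated.distinguished (S := S) (d := n + 1)) :
    IsSplitMono c := by
  have hB : (DAngle.rotate^[n] (DAngle.mk' S X f (L ⊞ M) N (biprod.lift 0 v) (biprod.desc c e) h)) ∈ DAngulated.distinguished (S := S) (d := n + 1) := iter_rotate_mem _ hA n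
  have hD : (stalk2 S (n + 1) L) ∈ DAngulated.distinguished (S := S) (d := n + 1) := stalk2_mem (by omega) L
  -- object identifications
  have hAobj1 : (DAngle.mk' S X f (L ⊞ M) N (biprod.lift 0 v) (biprod.desc c e) h).obj ⟨n + 1, by omega⟩ = (L ⊞ M) :=
    DAngle.mkObj_mid X (L ⊞ M) N ⟨n + 1, by omega⟩ rfl
  have hAobj2 : (DAngle.mk' S X f (L ⊞ M) N (biprod.lift 0 v) (biprod.desc c e) h).obj ⟨n + 2, by omega⟩ = N :=
    DAngle.mkObj_last X (L ⊞ M) N ⟨n + 2, by omega⟩ rfl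
  have hB1 : (DAngle.rotate^[n] (DAngle.mk' S X f (L ⊞ M) N (biprod.lift 0 v) (biprod.desc c e) h)).obj ⟨1, by omega⟩ = (DAngle.mk' S X f (L ⊞ M) N (biprod.lift 0 v) (biprod.desc c e) h).obj ⟨n + 1, by omega⟩ :=
    iter_rotate_obj _ n 1 (n + 1) (by omega) (by omega) (by omega)
  have hB2 : (DAngle.rotate^[n] (DAngle.mk' S X f (L ⊞ M) N (biprod.lift 0 v) (biprod.desc c e) h)).obj ⟨2, by omega⟩ = (DAngle.mk' S X f (L ⊞ M) N (biprod.lift 0 v) (biprod.desc c e) h).obj ⟨n + 2, by omega⟩ :=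
    iter_rotate_obj _ n 2 (n + 2) (by omega) (by omega) (by omega)
  have hD1 : (stalk2 S (n + 1) L).obj ⟨1, by omega⟩ = L := stalk2_obj_eq_of_mem L 1 (by omega) (Or.inl rfl)
  have hD2 : (stalk2 S (n + 1) L).obj ⟨2, by omega⟩ = L := stalk2_obj_eq_of_mem L 2 (by omega) (Or.inr rfl)
  -- morphism identifications
  have hAmorn : (DAngle.mk' S X f (L ⊞ M) N (biprod.lift 0 v) (biprod.desc c e) h).mor ⟨n, by omega⟩ =
      eqToHom (DAngle.mkObj_lt X (L ⊞ M) N ⟨n, by omega⟩ (Nat.lt_succ_self n)) ≫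
        biprod.lift 0 v ≫ eqToHom hAobj1.symm := by
    dsimp only [DAngle.mk']
    rw [dif_neg (lt_irrefl n), dif_pos rfl]
  have hAmorn1 : (DAngle.mk' S X f (L ⊞ M) N (biprod.lift 0 v) (biprod.desc c e) h).mor ⟨n + 1, by omega⟩ =
      eqToHom hAobj1 ≫ biprod.desc c e ≫ eqToHom hAobj2.symm := by
    dsimp only [DAngle.mk']
    rw [dif_neg (show ¬(n + 1 < n) by omega), dif_neg (show ¬(n + 1 = n) by omega)]
  have hBmor0 := iter_rotate_mor n (DAngle.mk' S X f (L ⊞ M) N (biprod.lift 0 v) (biprod.desc c e) h) 0 n (by omega) (by omega) (by omega)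
  have hBmor1 := iter_rotate_mor n (DAngle.mk' S X f (L ⊞ M) N (biprod.lift 0 v) (biprod.desc c e) h) 1 (n + 1) (by omega) (by omega) (by omega)
  have hDmor1 : (stalk2 S (n + 1) L).mor ⟨1, by omega⟩ = eqToHom (hD1.trans hD2.symm) := by
    dsimp only [stalk2]
    rw [dif_pos rfl]
  -- apply (N3)
  set φ₁ : (DAngle.rotate^[n] (DAngle.mk' S X f (L ⊞ M) N (biprod.lift 0 v) (biprod.desc c e) h)).obj ⟨1, by omega⟩ ⟶ (stalk2 S (n + 1) L).obj ⟨1, by omega⟩ :=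
    eqToHom (hB1.trans hAobj1) ≫ biprod.fst ≫ eqToHom hD1.symm with hphidef
  have hsq : (DAngle.rotate^[n] (DAngle.mk' S X f (L ⊞ M) N (biprod.lift 0 v) (biprod.desc c e) h)).mor ⟨0, Nat.succ_pos _⟩ ≫ φ₁ =
      (0 : (DAngle.rotate^[n] (DAngle.mk' S X f (L ⊞ M) N (biprod.lift 0 v) (biprod.desc c e) h)).obj ⟨0, Nat.succ_pos _⟩ ⟶ (stalk2 S (n + 1) L).obj ⟨0, Nat.succ_pos _⟩) ≫
        (stalk2 S (n + 1) L).mor ⟨0, Nat.succ_pos _⟩ := by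
    rw [hphidef, hBmor0, hAmorn]
    dsimp only [Fin.castSucc_mk, Fin.succ_mk, DAngle.mk']
    simp [eqToHom_trans_assoc]
    repeat erw [eqToHom_trans_assoc]
    simp only [eqToHom_refl, Category.id_comp]
    erw [biprod.lift_fst_assoc]
    rw [Limits.zero_comp]
    erw [Limits.zero_comp, Limits.comp_zero]
  obtain ⟨g, hg0, hg1⟩ := DAngulated.complete hB hD 0 φ₁ hsq
  have hcomm : (DAngle.rotate^[n] (DAngle.mk' S X f (L ⊞ M) N (biprod.lift 0 v) (biprod.desc c e) h)).mor ⟨1, by omega⟩ ≫ g.hom ⟨2, by omega⟩ =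
      g.hom ⟨1, by omega⟩ ≫ (stalk2 S (n + 1) L).mor ⟨1, by omega⟩ := g.comm ⟨1, by omega⟩
  rw [hg1, hphidef, hBmor1, hAmorn1, hDmor1] at hcomm
  simp only [Category.assoc, eqToHom_trans, eqToHom_trans_assoc] at hcomm
  -- extract the retraction
  set r : N ⟶ L := eqToHom (hB2.trans hAobj2).symm ≫ g.hom ⟨2, by omega⟩ ≫ eqToHom hD2
    with hrdef
  have key : biprod.desc c e ≫ r = biprod.fst := by
    have h5 := congrArg (fun t => t ≫ eqToHom hD2) hcomm
    simp only [Category.assoc, eqToHom_trans, eqToHom_refl, Category.comp_id] at h5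
    rw [hrdef]
    exact (cancel_epi (eqToHom (hB1.trans hAobj1))).mp (by simp at h5 ⊢; exact h5)
  have hret : c ≫ r = 𝟙 L := by
    rw [← biprod.inl_desc c e, Category.assoc, key, biprod.inl_fst]
  exact ⟨⟨⟨r, hret⟩⟩⟩
end

section
/- Let C be a triangulated category and A → L ⊕ M →^{(c,d)} N → ΣA a distinguished triangle in which the component A → L of the first map is zero. Then the triangle is isomorphic to the direct sum of a distinguished triangle A → M → Q → ΣA with the contractible triangle 0 → L →^{1} L → 0. -/
open CategoryTheory CategoryTheory.Limits CategoryTheory.Pretriangulated ZeroObject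

variable {C : Type u} [Category.{v} C] [Preadditive C] [HasZeroObject C] [HasShift C ℤ]
  [∀ n : ℤ, (shiftFunctor C n).Additive] [Pretriangulated C] [HasBinaryBiproducts C]

/-- The componentwise direct sum of two triangles. -/
noncomputable def sumTriangle (T₁ T₂ : Triangle C) : Triangle C :=
  Triangle.mk (biprod.map T₁.mor₁ T₂.mor₁) (biprod.map T₁.mor₂ T₂.mor₂)
    (biprod.desc (T₁.mor₃ ≫ (shiftFunctor C (1 : ℤ)).map biprod.inl)
      (T₂.mor₃ ≫ (shiftFunctor C (1 : ℤ)).map biprod.inr))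

/-- Binary biproduct vs. pi over `WalkingPair`. -/
noncomputable def biprodPiIso (f : WalkingPair → C) :
    (f .left ⊞ f .right) ≅ ∏ᶜ f where
  hom := Pi.lift (fun j => match j with
    | .left => biprod.fst
    | .right => biprod.snd)
  inv := biprod.lift (Pi.π f .left) (Pi.π f .right)
  hom_inv_id := by ext <;> simp
  inv_hom_id := by
    refine Pi.hom_ext _ _ (fun j => ?_)
    rcases j with _ | _ <;> simp

lemma sumTriangle_distinguished (T₁ T₂ : Triangle C)
    (h₁ : T₁ ∈ distTriang C) (h₂ : T₂ ∈ distTriang C) :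
    sumTriangle T₁ T₂ ∈ distTriang C := by
  let Tf : WalkingPair → Triangle C := fun j => match j with
    | .left => T₁
    | .right => T₂
  have hTf : ∀ j, Tf j ∈ distTriang C := by rintro (_ | _) <;> assumption
  refine isomorphic_distinguished _ (productTriangle_distinguished Tf hTf) _ ?_
  refine Triangle.isoMk _ _ (biprodPiIso (fun j => (Tf j).obj₁))
    (biprodPiIso (fun j => (Tf j).obj₂)) (biprodPiIso (fun j => (Tf j).obj₃)) ?_ ?_ ?_
  · dsimp only [sumTriangle, productTriangle, Triangle.mk]
    refine Pi.hom_ext _ _ (fun j => ?_)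
    rcases j with _ | _ <;> simp [sumTriangle, biprodPiIso, Tf]
  · dsimp only [sumTriangle, productTriangle, Triangle.mk]
    refine Pi.hom_ext _ _ (fun j => ?_)
    rcases j with _ | _ <;> simp [sumTriangle, biprodPiIso, Tf]
  · dsimp only [sumTriangle, productTriangle, Triangle.mk]
    dsimp [sumTriangle, biprodPiIso]
    rw [← cancel_mono (piComparison (shiftFunctor C (1 : ℤ)) (fun j => (Tf j).obj₁))]
    simp only [Category.assoc, IsIso.inv_hom_id, Category.comp_id]
    refine Pi.hom_ext _ _ (fun j => ?_)
    rcases j with _ | _ <;>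
    · ext <;>
        simp [Tf, piComparison_comp_π, ← Functor.map_comp]

/-- Let `C` be a triangulated category and `A → L ⊞ M →⁽ᶜ ᵈ⁾ N → ΣA` a
distinguished triangle in which the component `A ⟶ L` of the first map is zero. Then the
triangle is isomorphic to the direct sum of a distinguished triangle `A → M → Q → ΣA`
with the contractible triangle `0 → L →¹ L → 0`. -/
theorem triangle_isoSumTrivial_of_fst_eq_zero (A L M N : C) (v : A ⟶ M) (c : L ⟶ N)
    (e : M ⟶ N) (h : N ⟶ A⟦(1 : ℤ)⟧)
    (hT : Triangle.mk (biprod.lift (0 : A ⟶ L) v) (biprod.desc c e) h ∈ (distTriang C)) :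
    ∃ (Q : C) (t : M ⟶ Q) (z : Q ⟶ A⟦(1 : ℤ)⟧),
      Triangle.mk v t z ∈ (distTriang C) ∧
      Nonempty (Triangle.mk (biprod.lift (0 : A ⟶ L) v) (biprod.desc c e) h ≅
        sumTriangle (Triangle.mk v t z)
          (Triangle.mk (0 : (0 : C) ⟶ L) (𝟙 L) (0 : L ⟶ (0 : C)⟦(1 : ℤ)⟧))) := by
  obtain ⟨Q, t, z, hQ⟩ := distinguished_cocone_triangle v
  refine ⟨Q, t, z, hQ, ?_⟩
  have hS : sumTriangle (Triangle.mk v t z)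
      (Triangle.mk (0 : (0 : C) ⟶ L) (𝟙 L) (0 : L ⟶ (0 : C)⟦(1 : ℤ)⟧)) ∈ distTriang C :=
    sumTriangle_distinguished _ _ hQ (contractible_distinguished₁ L)
  let e₁ : A ≅ A ⊞ (0 : C) :=
    { hom := biprod.inl
      inv := biprod.fst
      inv_hom_id := by
        apply biprod.hom_ext' <;>
          [simp; apply (isZero_zero C).eq_of_src] }
  let e₂ : (L ⊞ M : C) ≅ M ⊞ L := biprod.braiding L M
  obtain ⟨e', -⟩ := exists_iso_of_arrow_iso _ _ hT hS
    (Arrow.isoMk e₁ e₂ (by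
      dsimp only [sumTriangle, Triangle.mk]
      dsimp [e₁, e₂, sumTriangle]
      ext <;> simp))
  exact ⟨e'⟩
end

section
/- Let C be a k-linear Hom-finite Krull–Schmidt (d+2)-angulated category and A_• : A_0 →^{α_0} A_1 → ⋯ → A_{d+1} → Σ^d A_0 an Auslander–Reiten (d+2)-angle. For an indecomposable object U of C, the induced map Hom_C(U, A_0) → Hom_C(U, A_1) is injective if and only if U is not isomorphic to Σ^{-d} A_{d+1}. -/
open CategoryTheory CategoryTheory.Limits ZeroObject

universe v u

variable (C : Type u) [Category.{v} C]

attribute [local instance] CategoryTheory.Limits.hasBinaryBiproducts_of_finite_biproducts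

variable {C}

section RepTheory

variable (C)
variable [Preadditive C]

/-- A morphism lies in the Jacobson radical of the category. -/
def IsRadicalHom {A B : C} (f : A ⟶ B) : Prop :=
  ∀ g : B ⟶ A, IsIso (𝟙 A - f ≫ g)

/-- `RadComp C n f` says that `f` is a composite of `n` radical morphisms; sums of such
morphisms span the `n`-th power `rad_C^n` of the radical. -/
inductive RadComp : ℕ → ∀ {A B : C}, (A ⟶ B) → Prop
  | single {A B : C} (f : A ⟶ B) : IsRadicalHom C f → RadComp 1 f
  | comp {n : ℕ} {A B D : C} (f : A ⟶ B) (g : B ⟶ D) :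
      RadComp n f → IsRadicalHom C g → RadComp (n + 1) (f ≫ g)

variable [HasZeroObject C] [HasFiniteBiproducts C]

/-- An object is indecomposable if it is non-zero and admits no non-trivial direct sum
decomposition. -/
def Indecomposable (X : C) : Prop :=
  ¬ IsZero X ∧ ∀ Y Z : C, Nonempty (X ≅ Y ⊞ Z) → IsZero Y ∨ IsZero Z

/-- A category is locally finite if for every indecomposable `X` there are, up to
isomorphism, only finitely many indecomposables `Y` with `Hom(X, Y) ≠ 0`, and only
finitely many indecomposables `Y` with `Hom(Y, X) ≠ 0`. -/
def IsLocallyFinite : Prop :=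
  ∀ X : C, Indecomposable C X →
    (∃ L : List C, ∀ Y : C, Indecomposable C Y → (∃ f : X ⟶ Y, f ≠ 0) →
      ∃ Z ∈ L, Nonempty (Y ≅ Z)) ∧
    (∃ L : List C, ∀ Y : C, Indecomposable C Y → (∃ f : Y ⟶ X, f ≠ 0) →
      ∃ Z ∈ L, Nonempty (Y ≅ Z))

/-- A morphism is left almost split if it is not a split monomorphism and every
non-split-monomorphism out of its source factors through it. -/
def IsLeftAlmostSplit {A B : C} (f : A ⟶ B) : Prop :=
  ¬ IsSplitMono f ∧ ∀ ⦃X : C⦄ (g : A ⟶ X), ¬ IsSplitMono g → ∃ h : B ⟶ X, f ≫ h = g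

/-- A morphism is right almost split if it is not a split epimorphism and every
non-split-epimorphism into its target factors through it. -/
def IsRightAlmostSplit {A B : C} (f : A ⟶ B) : Prop :=
  ¬ IsSplitEpi f ∧ ∀ ⦃X : C⦄ (g : X ⟶ B), ¬ IsSplitEpi g → ∃ h : X ⟶ A, h ≫ f = g

/-- A morphism `f : X ⟶ Y` is right minimal if any `g` with `g ≫ f = f` is an
automorphism. -/
def IsRightMinimal {X Y : C} (f : X ⟶ Y) : Prop :=
  ∀ g : X ⟶ X, g ≫ f = f → IsIso g

/-- A morphism `f : X ⟶ Y` is left minimal if any `g` with `f ≫ g = f` is an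
automorphism. -/
def IsLeftMinimal {X Y : C} (f : X ⟶ Y) : Prop :=
  ∀ g : Y ⟶ Y, f ≫ g = f → IsIso g

/-- An Auslander–Reiten `(d+2)`-angle: the first morphism is left almost split, the last
one is right almost split, and the intermediate morphisms lie in the radical. -/
def DAngle.IsAR {S : C ≌ C} {d : ℕ} (A : DAngle C S d) : Prop :=
  IsLeftAlmostSplit C (A.mor ⟨0, Nat.succ_pos _⟩) ∧
  IsRightAlmostSplit C (A.mor ⟨d, Nat.lt_succ_self _⟩) ∧
  ∀ i : Fin (d + 1), 0 < (i : ℕ) → (i : ℕ) < d → IsRadicalHom C (A.mor i)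

end RepTheory

/-- A Serre functor on a `k`-linear Hom-finite category: an autoequivalence `S` with
functorial isomorphisms `Hom(X, Y) ≅ D Hom(Y, S X)`. -/
structure SerreFunctor (k : Type*) [Field k] (C : Type u) [Category.{v} C] [Preadditive C]
    [Linear k C] where
  equiv : C ≌ C
  homEquiv : ∀ X Y : C, (X ⟶ Y) ≃ₗ[k] Module.Dual k (Y ⟶ equiv.functor.obj X)
  nat_left : ∀ {X X' Y : C} (u : X' ⟶ X) (g : X ⟶ Y) (t : Y ⟶ equiv.functor.obj X'),
      homEquiv X' Y (u ≫ g) t = homEquiv X Y g (t ≫ equiv.functor.map u)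
  nat_right : ∀ {X Y Y' : C} (g : X ⟶ Y) (v : Y ⟶ Y') (t : Y' ⟶ equiv.functor.obj X),
      homEquiv X Y' (g ≫ v) t = homEquiv X Y g (v ≫ t)

section ARAux
open DAngle
set_option linter.unusedSectionVars false
variable {C : Type u} [Category.{v} C] [Preadditive C] [HasZeroObject C] [HasFiniteBiproducts C]
variable {S : C ≌ C} {d : ℕ}

lemma sAdd (S : C ≌ C) : S.functor.Additive := by
  have : PreservesLimitsOfShape (Discrete WalkingPair) S.functor := inferInstance
  exact Functor.additive_of_preserves_binary_products _

lemma morS_eq_lt (B : DAngle C S d) (i : Fin (d+2)) (h : (i:ℕ) < d + 1) :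
    B.morS i = eqToHom (B.objS_eq_of_lt i.castSucc (by simp only [Fin.coe_castSucc]; omega)) ≫
      B.mor ⟨(i : ℕ), h⟩ ≫
      eqToHom (B.objS_eq_of_lt i.succ (by simp only [Fin.val_succ]; omega)).symm :=
  dif_pos h

lemma morS_eq_last (B : DAngle C S d) (i : Fin (d+2)) (h : ¬ ((i:ℕ) < d + 1)) :
    B.morS i = eqToHom (by
      rw [B.objS_eq_of_lt i.castSucc (by simp only [Fin.coe_castSucc]; omega)]
      congr 1
      ext
      simp only [Fin.coe_castSucc]
      omega) ≫ B.conn ≫ eqToHom (B.objS_eq_of_eq i.succ (by simp only [Fin.val_succ]; omega)).symm :=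
  dif_neg h

lemma rotate_objS (B : DAngle C S d) (m : ℕ) (hm : m < d + 2) :
    B.rotate.objS ⟨m, by omega⟩ = B.objS ⟨m + 1, by omega⟩ := by
  rw [B.rotate.objS_eq_of_lt ⟨m, by omega⟩ hm]
  rfl

lemma rotate_mor (B : DAngle C S d) (n : ℕ) (hn : n < d + 1) :
    B.rotate.mor ⟨n, hn⟩ = B.morS ⟨n + 1, by omega⟩ := rfl

lemma rotate_conn (B : DAngle C S d) :
    B.rotate.conn = eqToHom (B.objS_eq_of_eq (Fin.succ ⟨d + 1, Nat.lt_succ_self _⟩)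
        (by simp only [Fin.val_succ])) ≫
      (((-1 : ℤ) ^ d) • S.functor.map (B.mor ⟨0, Nat.succ_pos _⟩)) ≫
      eqToHom (congrArg S.functor.obj
        (B.objS_eq_of_lt (Fin.succ ⟨0, Nat.succ_pos _⟩) (by simp only [Fin.val_succ]; omega)).symm) := rfl

lemma trivial_obj_le (X : C) (i : Fin (d+2)) (h : (i:ℕ) ≤ 1) :
    (DAngle.trivial S d X).obj i = X := if_pos h

lemma trivial_obj_gt (X : C) (i : Fin (d+2)) (h : ¬ (i:ℕ) ≤ 1) :
    (DAngle.trivial S d X).obj i = (0 : C) := if_neg h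

lemma trivial_mor_ne (X : C) (i : Fin (d+1)) (h : (i:ℕ) ≠ 0) :
    (DAngle.trivial S d X).mor i = 0 := dif_neg h

lemma trivial_conn (X : C) : (DAngle.trivial S d X).conn = 0 := rfl

lemma trivial_mor_zero (X : C) (i : Fin (d+1)) (h : (i:ℕ) = 0) :
    (DAngle.trivial S d X).mor i =
      eqToHom ((trivial_obj_le X i.castSucc (by simp only [Fin.coe_castSucc]; omega)).trans
        (trivial_obj_le X i.succ (by simp only [Fin.val_succ]; omega)).symm) := by
  show dite _ _ _ = _
  refine (dif_pos h).trans ?_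
  simp; rfl

lemma trivial_morS_one (X : C) :
    (DAngle.trivial S d X).morS ⟨1, by omega⟩ = 0 := by
  by_cases h : 1 < d + 1
  · rw [morS_eq_lt _ _ h, trivial_mor_ne X _ (by simp)]
    rw [zero_comp, comp_zero]
  · rw [morS_eq_last _ _ h, trivial_conn]
    rw [zero_comp, comp_zero]

end ARAux
section ARAux2
open DAngle
set_option linter.unusedSectionVars false
set_option maxHeartbeats 1000000
variable {C : Type u} [Category.{v} C] [Preadditive C] [HasZeroObject C] [HasFiniteBiproducts C]
variable {S : C ≌ C} {d : ℕ} [DAngulated C S d]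

lemma CZ_zero (B : DAngle C S d) (hB : B ∈ DAngulated.distinguished (S := S) (d := d)) :
    B.morS ⟨0, by omega⟩ ≫ B.morS ⟨1, by omega⟩ = 0 := by
  set X := B.obj ⟨0, Nat.succ_pos _⟩ with hX
  set T := DAngle.trivial S d X with hT
  have h0 : T.obj ⟨0, Nat.succ_pos _⟩ = X := trivial_obj_le X _ (by norm_num)
  have h1 : T.obj ⟨1, by omega⟩ = X := trivial_obj_le X _ (by norm_num)
  obtain ⟨f, hf0, hf1⟩ := DAngulated.complete (DAngulated.trivial_mem X) hB
    (eqToHom h0) (eqToHom h1 ≫ B.mor ⟨0, Nat.succ_pos _⟩)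
    (by rw [trivial_mor_zero X ⟨0, Nat.succ_pos _⟩ rfl]; rw [eqToHom_trans_assoc])
  rw [morS_eq_lt _ ⟨0, by omega⟩ (Nat.succ_pos _)]
  by_cases hd : 1 < d + 1
  · have hc := f.comm ⟨1, hd⟩
    rw [trivial_mor_ne X _ (by norm_num)] at hc
    have hcs : f.hom (Fin.castSucc ⟨1, hd⟩) = eqToHom h1 ≫ B.mor ⟨0, Nat.succ_pos _⟩ := hf1
    rw [hcs, zero_comp] at hc
    have hz : B.mor ⟨0, Nat.succ_pos _⟩ ≫ B.mor ⟨1, hd⟩ = 0 := by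
      rw [Category.assoc] at hc
      exact ((cancel_epi (eqToHom h1)).mp (by rw [comp_zero]; exact hc.symm))
    rw [morS_eq_lt _ ⟨1, by omega⟩ hd]
    simp only [Category.assoc, eqToHom_trans_assoc, eqToHom_refl, Category.id_comp]
    have hz0 : B.mor 0 ≫ B.mor ⟨1, hd⟩ = 0 := hz
    rw [reassoc_of% hz, zero_comp, comp_zero]
  · have hd0 : d = 0 := by omega
    subst hd0
    have hc := f.comm_conn
    rw [trivial_conn, zero_comp] at hc
    have hcs : f.hom ⟨0 + 1, by omega⟩ = eqToHom h1 ≫ B.mor ⟨0, Nat.succ_pos _⟩ := hf1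
    rw [hcs] at hc
    have hz : B.mor ⟨0, Nat.succ_pos _⟩ ≫ B.conn = 0 := by
      rw [Category.assoc] at hc
      exact ((cancel_epi (eqToHom h1)).mp (by rw [comp_zero]; exact hc.symm))
    rw [morS_eq_last _ ⟨1, by omega⟩ hd]
    simp only [Category.assoc, eqToHom_trans_assoc, eqToHom_refl, Category.id_comp]
    have hz0 : B.mor 0 ≫ B.conn = 0 := hz
    simp [reassoc_of% hz0, hz0]
end ARAux2
section ARAux3
open DAngle
set_option linter.unusedSectionVars false
set_option maxHeartbeats 1000000
variable {C : Type u} [Category.{v} C] [Preadditive C] [HasZeroObject C] [HasFiniteBiproducts C]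
variable {S : C ≌ C} {d : ℕ}

lemma sandwich_eq_zero {W X Y Z : C} (p : W = X) (q : Y = Z) (f : X ⟶ Y)
    (h : eqToHom p ≫ f ≫ eqToHom q = 0) : f = 0 := by
  have := congrArg (fun t => eqToHom p.symm ≫ t ≫ eqToHom q.symm) h
  simpa using this

lemma rotate_morS_lt (B : DAngle C S d) (n : ℕ) (hn : n < d + 1) :
    B.rotate.morS ⟨n, by omega⟩ =
      eqToHom (rotate_objS B n (by omega)) ≫ B.morS ⟨n + 1, by omega⟩ ≫
        eqToHom (rotate_objS B (n + 1) (by omega)).symm := by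
  rw [morS_eq_lt B.rotate ⟨n, by omega⟩ hn]
  rfl

lemma rotate_morS_last (B : DAngle C S d) :
    B.rotate.morS ⟨d + 1, by omega⟩ =
      eqToHom ((rotate_objS B (d+1) (by norm_num)).trans
          (B.objS_eq_of_eq ⟨d + 2, by norm_num⟩ (by norm_num))) ≫
        (((-1 : ℤ) ^ d) • S.functor.map (B.mor ⟨0, Nat.succ_pos _⟩)) ≫
        eqToHom (((congrArg S.functor.obj
            (B.objS_eq_of_lt ⟨1, by norm_num⟩ (by norm_num)).symm)).trans
          (B.rotate.objS_eq_of_eq ⟨d + 2, by norm_num⟩ (by norm_num)).symm) := by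
  rw [morS_eq_last B.rotate ⟨d + 1, by omega⟩ (Nat.lt_irrefl (d+1)), rotate_conn]
  have key : ∀ {W X Y Z V V' : C} (p : W = X) (q : X = Y) (g : Y ⟶ Z) (r : Z = V)
      (s : V = V'), eqToHom p ≫ (eqToHom q ≫ g ≫ eqToHom r) ≫ eqToHom s =
        eqToHom (p.trans q) ≫ g ≫ eqToHom (r.trans s) := by
    intros; subst_vars; simp
  exact key _ _ _ _ _
  try rfl

end ARAux3
section ARAux4a
open DAngle
set_option linter.unusedSectionVars false
set_option maxHeartbeats 1000000
variable {C : Type u} [Category.{v} C] [Preadditive C] [HasZeroObject C] [HasFiniteBiproducts C]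
variable {S : C ≌ C} {d : ℕ} [DAngulated C S d]

lemma neg_one_pow_smul_cancel {X Y : C} {f g : X ⟶ Y}
    (h : ((-1 : ℤ) ^ d) • f = ((-1 : ℤ) ^ d) • g) : f = g := by
  have h2 : ((-1 : ℤ) ^ d) * ((-1 : ℤ) ^ d) = 1 := by
    rw [← pow_add]
    exact Even.neg_one_pow ⟨d, rfl⟩
  have := congrArg (fun t => ((-1 : ℤ) ^ d) • t) h
  simpa [smul_smul, h2] using this

lemma CE_zero (B : DAngle C S d)
    (hB : B ∈ DAngulated.distinguished (S := S) (d := d))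
    {Y : C} (u : Y ⟶ B.objS ⟨1, by omega⟩)
    (hu : u ≫ B.morS ⟨1, by omega⟩ = 0) :
    ∃ w : Y ⟶ B.objS ⟨0, by omega⟩, w ≫ B.morS ⟨0, by omega⟩ = u := by
  set T := DAngle.trivial S d Y with hTdef
  have hT' : T.rotate ∈ DAngulated.distinguished (S := S) (d := d) :=
    (DAngulated.rotate_mem_iff T).mp (DAngulated.trivial_mem Y)
  have hB' : B.rotate ∈ DAngulated.distinguished (S := S) (d := d) :=
    (DAngulated.rotate_mem_iff B).mp hB
  have hT0 : T.rotate.obj ⟨0, Nat.succ_pos _⟩ = Y :=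
    (T.objS_eq_of_lt ⟨1, by omega⟩ (by norm_num)).trans (trivial_obj_le Y ⟨1, by omega⟩ (by norm_num))
  have hsq : T.rotate.mor ⟨0, Nat.succ_pos _⟩ ≫
      (0 : T.rotate.obj ⟨1, by omega⟩ ⟶ B.rotate.obj ⟨1, by omega⟩) =
      (eqToHom hT0 ≫ u) ≫ B.rotate.mor ⟨0, Nat.succ_pos _⟩ := by
    show _ ≫ _ = (eqToHom hT0 ≫ u) ≫ B.morS ⟨1, by omega⟩
    simp only [comp_zero, Category.assoc, hu]; exact comp_zero
  obtain ⟨f, hf0, hf1⟩ := DAngulated.complete hT' hB' (eqToHom hT0 ≫ u) 0 hsq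
  have hcc := f.comm_conn
  rw [hf0, rotate_conn T, rotate_conn B, trivial_mor_zero Y ⟨0, Nat.succ_pos _⟩ rfl] at hcc
  simp only [eqToHom_map, Functor.map_comp, Preadditive.comp_zsmul,
    Preadditive.zsmul_comp, Category.assoc, eqToHom_trans_assoc] at hcc
  have hcc' := (Preadditive.zsmul_comp _ _ _).symm.trans (hcc.trans (Preadditive.comp_zsmul _ _ _))
  have hcc'' := neg_one_pow_smul_cancel hcc'
  have key2 : ∀ {P Q R Y' Z : C} (p : P = Q) (q : Q = S.functor.obj R) (r : R = Y') (v : Y' ⟶ Z),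
      (eqToHom p ≫ eqToHom q) ≫ S.functor.map (eqToHom r ≫ v) =
        eqToHom (p.trans (q.trans (congrArg S.functor.obj r))) ≫ S.functor.map v := by
    intros; subst_vars; simp
  have hcc2 := (key2 _ _ _ _).symm.trans hcc''
  have hR : T.rotate.obj ⟨d + 1, by omega⟩ = S.functor.obj Y :=
    (T.objS_eq_of_eq ⟨d + 2, by norm_num⟩ (by norm_num)).trans
      (congrArg S.functor.obj (trivial_obj_le Y ⟨0, by omega⟩ (by norm_num)))
  have hE : B.rotate.obj ⟨d + 1, by omega⟩ = S.functor.obj (B.obj ⟨0, Nat.succ_pos _⟩) :=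
    B.objS_eq_of_eq ⟨d + 2, by norm_num⟩ (by norm_num)
  have hE2 : S.functor.obj (B.obj ⟨1, by omega⟩) = S.functor.obj (B.objS ⟨1, by omega⟩) :=
    congrArg S.functor.obj (B.objS_eq_of_lt ⟨1, by omega⟩ (by norm_num)).symm
  have hcc3 : eqToHom hR.symm ≫ (f.hom ⟨d + 1, by omega⟩ ≫ eqToHom hE ≫
      S.functor.map (B.mor ⟨0, Nat.succ_pos _⟩) ≫ eqToHom hE2) = S.functor.map u := by
    have h5 : f.hom ⟨d + 1, by omega⟩ ≫ eqToHom hE ≫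
        S.functor.map (B.mor ⟨0, Nat.succ_pos _⟩) ≫ eqToHom hE2 =
        eqToHom hR ≫ S.functor.map u := hcc2.symm
    rw [h5, eqToHom_trans_assoc, eqToHom_refl, Category.id_comp]
  refine ⟨S.functor.preimage (eqToHom hR.symm ≫ f.hom ⟨d + 1, by omega⟩ ≫ eqToHom hE) ≫
    eqToHom (B.objS_eq_of_lt ⟨0, by omega⟩ (by norm_num)).symm, ?_⟩
  rw [morS_eq_lt B ⟨0, by omega⟩ (by norm_num)]
  apply S.functor.map_injective
  simp only [Category.assoc, eqToHom_trans_assoc, eqToHom_refl, Category.id_comp,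
    Functor.map_comp, eqToHom_map, Functor.map_preimage, Fin.castSucc_mk, Fin.succ_mk]
  simpa using hcc3

end ARAux4a
section ARAux4
open DAngle
set_option linter.unusedSectionVars false
set_option maxHeartbeats 1000000
variable {C : Type u} [Category.{v} C] [Preadditive C] [HasZeroObject C] [HasFiniteBiproducts C]
variable {S : C ≌ C} {d : ℕ} [DAngulated C S d]

lemma CZ (n : ℕ) (hn : n < d + 1) (B : DAngle C S d)
    (hB : B ∈ DAngulated.distinguished (S := S) (d := d)) :
    B.morS ⟨n, by omega⟩ ≫ B.morS ⟨n + 1, by omega⟩ = 0 := by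
  induction n generalizing B with
  | zero => exact CZ_zero B hB
  | succ n ih =>
    have hB' := (DAngulated.rotate_mem_iff B).mp hB
    have h := ih (by omega) B.rotate hB'
    rw [rotate_morS_lt B n (by omega), rotate_morS_lt B (n+1) (by omega)] at h
    simp only [Category.assoc, eqToHom_trans_assoc, eqToHom_refl, Category.id_comp] at h
    rw [← cancel_epi (eqToHom (rotate_objS B n (by omega))),
      ← cancel_mono (eqToHom (rotate_objS B (n + 2) (by omega)).symm)]
    simpa using h

lemma CE (n : ℕ) (hn : n < d + 1) (B : DAngle C S d)
    (hB : B ∈ DAngulated.distinguished (S := S) (d := d))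
    {Y : C} (u : Y ⟶ B.objS ⟨n + 1, by omega⟩)
    (hu : u ≫ B.morS ⟨n + 1, by omega⟩ = 0) :
    ∃ w : Y ⟶ B.objS ⟨n, by omega⟩, w ≫ B.morS ⟨n, by omega⟩ = u := by
  induction n generalizing B Y with
  | zero => exact CE_zero B hB u hu
  | succ n ih =>
    have hB' := (DAngulated.rotate_mem_iff B).mp hB
    have e2 : B.rotate.objS ⟨n + 1, by omega⟩ = B.objS ⟨n + 2, by omega⟩ :=
      rotate_objS B (n+1) (by omega)
    have e1 : B.rotate.objS ⟨n, by omega⟩ = B.objS ⟨n + 1, by omega⟩ :=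
      rotate_objS B n (by omega)
    have hu' : (u ≫ eqToHom e2.symm) ≫ B.rotate.morS ⟨n + 1, by omega⟩ = 0 := by
      rw [rotate_morS_lt B (n+1) (by omega)]
      simp only [Category.assoc, eqToHom_trans_assoc, eqToHom_refl, Category.id_comp]
      simp [reassoc_of% hu, hu]
    obtain ⟨w, hw⟩ := ih (by omega) B.rotate hB' (u ≫ eqToHom e2.symm) hu'
    refine ⟨w ≫ eqToHom e1, ?_⟩
    rw [rotate_morS_lt B n (by omega)] at hw
    have := congrArg (fun t => t ≫ eqToHom e2) hw
    simp only [Category.assoc, eqToHom_trans, eqToHom_refl, Category.comp_id] at this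
    simpa using this

end ARAux4
section ARAux5
open DAngle
set_option linter.unusedSectionVars false
set_option maxHeartbeats 1000000
variable {C : Type u} [Category.{v} C] [Preadditive C] [HasZeroObject C] [HasFiniteBiproducts C]

lemma isZero_or_isIso_of_splitEpi [IsIdempotentComplete C] {U Y : C}
    (hU : Indecomposable C U) (p : U ⟶ Y) (s : Y ⟶ U) (hs : s ≫ p = 𝟙 Y) :
    IsZero Y ∨ IsIso p := by
  have hidem : (𝟙 U - p ≫ s) ≫ (𝟙 U - p ≫ s) = 𝟙 U - p ≫ s := by
    simp only [Preadditive.sub_comp, Preadditive.comp_sub, Category.id_comp, Category.comp_id,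
      Category.assoc]
    rw [reassoc_of% hs]
    abel
  obtain ⟨Z, i, r, hir, hri⟩ := IsIdempotentComplete.idempotents_split U (𝟙 U - p ≫ s) hidem
  have hmono : Mono s := by
    constructor
    intro W g h hgh
    have := congrArg (fun t => t ≫ p) hgh
    simpa [Category.assoc, hs] using this
  have hsr : s ≫ r = 0 := by
    have h1 : s ≫ r ≫ i = 0 := by
      rw [hri]
      simp only [Preadditive.comp_sub, Category.comp_id]
      rw [reassoc_of% hs]
      abel
    have : Mono i := by
      constructor
      intro W g h hgh
      have := congrArg (fun t => t ≫ r) hgh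
      simpa [Category.assoc, hir] using this
    rw [← Category.assoc] at h1
    exact (cancel_mono i).mp (by simpa using h1)
  have hip : i ≫ p = 0 := by
    have h1 : i ≫ p ≫ s = 0 := by
      have h2 : i ≫ (𝟙 U - p ≫ s) = i := by rw [← hri, ← Category.assoc, hir, Category.id_comp]
      have := h2
      simp only [Preadditive.comp_sub, Category.comp_id] at this
      have h3 : i - i ≫ p ≫ s = i := by simpa [Category.assoc] using this
      have := sub_eq_self.mp h3
      simpa [Category.assoc] using this
    have : (i ≫ p) ≫ s = 0 ≫ s := by simpa [Category.assoc] using h1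
    exact (cancel_mono s).mp this
  have iso : U ≅ Y ⊞ Z :=
    { hom := biprod.lift p r
      inv := biprod.desc s i
      hom_inv_id := by
        rw [biprod.lift_desc, hri]
        abel
      inv_hom_id := by
        ext
        · simp [hs, hsr]
        · simp [hs, hsr, hip, hir]
        · simp [hip, hir, hsr]
        · simp [hip, hir] }
  rcases hU.2 Y Z ⟨iso⟩ with hY | hZ
  · exact Or.inl hY
  · right
    have hr0 : r = 0 := hZ.eq_of_tgt r 0
    have : p ≫ s = 𝟙 U := by
      have := hri
      rw [hr0] at this
      simp only [zero_comp] at this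
      have := this.symm
      rwa [sub_eq_zero, eq_comm] at this
    exact ⟨s, this, hs⟩

end ARAux5
section ARAux6
open DAngle
set_option linter.unusedSectionVars false
set_option maxHeartbeats 1600000
variable {C : Type u} [Category.{v} C] [Preadditive C] [HasZeroObject C] [HasFiniteBiproducts C]
variable {S : C ≌ C} {d : ℕ} [DAngulated C S d]

lemma neg_one_pow_smul_eq_zero {X Y : C} {f : X ⟶ Y}
    (h : ((-1 : ℤ) ^ d) • f = 0) : f = 0 :=
  neg_one_pow_smul_cancel (d := d) (by rw [h, smul_zero])

lemma unsandwich_mid {V W X X' Y Z : C} {p : V = W} {m : X = X'} {q : Y = Z}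
    {f : W ⟶ X} {g : X' ⟶ Y}
    (h : eqToHom p ≫ f ≫ eqToHom m ≫ g ≫ eqToHom q = 0) : f ≫ eqToHom m ≫ g = 0 := by
  have := congrArg (fun t => eqToHom p.symm ≫ t ≫ eqToHom q.symm) h
  simp only [Category.assoc, eqToHom_trans, eqToHom_trans_assoc, eqToHom_refl,
    Category.id_comp, Category.comp_id, comp_zero, zero_comp] at this
  simpa using this

/-- `mor d ≫ conn = 0` for a distinguished angle. -/
lemma mor_conn_zero (A : DAngle C S d)
    (hA : A ∈ DAngulated.distinguished (S := S) (d := d)) :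
    A.mor ⟨d, Nat.lt_succ_self _⟩ ≫ A.conn = 0 := by
  have h := CZ d (by omega) A hA
  rw [morS_eq_lt A ⟨d, by omega⟩ (Nat.lt_succ_self d), morS_eq_last A ⟨d + 1, by omega⟩ (Nat.lt_irrefl (d+1))] at h
  simp only [Category.assoc, eqToHom_trans_assoc] at h
  have h2 := unsandwich_mid h
  have h3 : A.mor ⟨d, Nat.lt_succ_self _⟩ ≫
      𝟙 (A.obj ⟨d + 1, Nat.lt_succ_self _⟩) ≫ A.conn = 0 := h2
  exact (congrArg (A.mor ⟨d, Nat.lt_succ_self _⟩ ≫ ·) (Category.id_comp A.conn)).symm.trans h3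

/-- `conn ≫ Σ mor 0 = 0` for a distinguished angle. -/
lemma conn_smor_zero (A : DAngle C S d)
    (hA : A ∈ DAngulated.distinguished (S := S) (d := d)) :
    A.conn ≫ S.functor.map (A.mor ⟨0, Nat.succ_pos _⟩) = 0 := by
  have hA' := (DAngulated.rotate_mem_iff A).mp hA
  have h := CZ d (by omega) A.rotate hA'
  rw [rotate_morS_lt A d (by omega), rotate_morS_last A,
    morS_eq_last A ⟨d + 1, by omega⟩ (Nat.lt_irrefl (d+1))] at h
  simp only [Category.assoc, eqToHom_trans_assoc, Preadditive.comp_zsmul,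
    Preadditive.zsmul_comp] at h
  have h1 := neg_one_pow_smul_eq_zero h
  have h2 := unsandwich_mid h1
  have h3 : A.conn ≫ 𝟙 (S.functor.obj (A.obj ⟨0, Nat.succ_pos _⟩)) ≫
      S.functor.map (A.mor ⟨0, Nat.succ_pos _⟩) = 0 := h2
  simpa using h3

/-- Exactness at `obj (d+1)`. -/
lemma exact_at_last (A : DAngle C S d)
    (hA : A ∈ DAngulated.distinguished (S := S) (d := d))
    {X : C} (t : X ⟶ A.obj ⟨d + 1, Nat.lt_succ_self _⟩) (ht : t ≫ A.conn = 0) :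
    ∃ w : X ⟶ A.obj ⟨d, by omega⟩, w ≫ A.mor ⟨d, Nat.lt_succ_self _⟩ = t := by
  have hOd1 : A.obj ⟨d + 1, Nat.lt_succ_self _⟩ = A.objS ⟨d + 1, by omega⟩ :=
    (A.objS_eq_of_lt ⟨d + 1, by omega⟩ (Nat.lt_succ_self (d+1))).symm
  have hu : (t ≫ eqToHom hOd1) ≫ A.morS ⟨d + 1, by omega⟩ = 0 := by
    rw [morS_eq_last A ⟨d + 1, by omega⟩ (Nat.lt_irrefl (d+1))]
    simp only [Category.assoc, eqToHom_trans_assoc]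
    have hgoal : t ≫ 𝟙 (A.obj ⟨d + 1, Nat.lt_succ_self _⟩) ≫ A.conn ≫
        eqToHom (A.objS_eq_of_eq ⟨d + 2, by norm_num⟩ (by norm_num)).symm = 0 := by
      rw [Category.id_comp, ← Category.assoc, ht, zero_comp]
    exact hgoal
  obtain ⟨w, hw⟩ := CE d (by omega) A hA (t ≫ eqToHom hOd1) hu
  rw [morS_eq_lt A ⟨d, by omega⟩ (Nat.lt_succ_self d)] at hw
  have h2 := congrArg (fun z => z ≫ eqToHom hOd1.symm) hw
  simp only [Category.assoc, eqToHom_trans, eqToHom_refl, Category.comp_id] at h2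
  have h3 : w ≫ eqToHom (A.objS_eq_of_lt ⟨d, by omega⟩ (Nat.lt_succ_of_lt (Nat.lt_succ_self d))) ≫
      A.mor ⟨d, Nat.lt_succ_self _⟩ = t := h2
  refine ⟨w ≫ eqToHom (A.objS_eq_of_lt ⟨d, by omega⟩ (Nat.lt_succ_of_lt (Nat.lt_succ_self d))), ?_⟩
  simpa using h3

/-- Exactness at `Σ obj 0`. -/
lemma exact_at_susp (A : DAngle C S d)
    (hA : A ∈ DAngulated.distinguished (S := S) (d := d))
    {X : C} (g : X ⟶ S.functor.obj (A.obj ⟨0, Nat.succ_pos _⟩))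
    (hg : g ≫ S.functor.map (A.mor ⟨0, Nat.succ_pos _⟩) = 0) :
    ∃ t : X ⟶ A.obj ⟨d + 1, Nat.lt_succ_self _⟩, t ≫ A.conn = g := by
  have hA' := (DAngulated.rotate_mem_iff A).mp hA
  have q1 : S.functor.obj (A.obj ⟨0, Nat.succ_pos _⟩) = A.rotate.objS ⟨d + 1, by omega⟩ :=
    ((rotate_objS A (d + 1) (by norm_num)).trans
      (A.objS_eq_of_eq ⟨d + 2, by norm_num⟩ (by norm_num))).symm
  have hu : (g ≫ eqToHom q1) ≫ A.rotate.morS ⟨d + 1, by omega⟩ = 0 := by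
    rw [rotate_morS_last A]
    simp only [Category.assoc, eqToHom_trans_assoc]
    have hgoal : g ≫ 𝟙 (S.functor.obj (A.obj ⟨0, Nat.succ_pos _⟩)) ≫
        (((-1 : ℤ) ^ d) • S.functor.map (A.mor ⟨0, Nat.succ_pos _⟩)) ≫
        eqToHom (((congrArg S.functor.obj
            (A.objS_eq_of_lt ⟨1, by norm_num⟩ (by norm_num)).symm)).trans
          (A.rotate.objS_eq_of_eq ⟨d + 2, by norm_num⟩ (by norm_num)).symm) = 0 := by
      simp only [Category.id_comp, Preadditive.comp_zsmul, Preadditive.zsmul_comp]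
      rw [← Category.assoc, hg, zero_comp, smul_zero]
    exact hgoal
  obtain ⟨w, hw⟩ := CE d (by omega) A.rotate hA' (g ≫ eqToHom q1) hu
  have q3 : A.rotate.objS ⟨d, by omega⟩ = A.obj ⟨d + 1, Nat.lt_succ_self _⟩ :=
    (rotate_objS A d (by omega)).trans (A.objS_eq_of_lt ⟨d + 1, by omega⟩ (Nat.lt_succ_self (d+1)))
  rw [rotate_morS_lt A d (by omega), morS_eq_last A ⟨d + 1, by omega⟩ (Nat.lt_irrefl (d+1))] at hw
  simp only [Category.assoc, eqToHom_trans_assoc, eqToHom_trans] at hw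
  have hw2 : w ≫ eqToHom q3 ≫ A.conn ≫ eqToHom q1 = g ≫ eqToHom q1 := hw
  have hw3 : ((w ≫ eqToHom q3) ≫ A.conn) ≫ eqToHom q1 = g ≫ eqToHom q1 := by
    rw [Category.assoc, Category.assoc]; exact hw2
  exact ⟨w ≫ eqToHom q3, (cancel_mono (eqToHom q1)).mp hw3⟩

end ARAux6
/-- Let `C` be a `k`-linear Hom-finite Krull–Schmidt `(d+2)`-angulated
category and `A_•` an Auslander–Reiten `(d+2)`-angle. For an indecomposable `U`, the
induced map `Hom(U, A₀) → Hom(U, A₁)` is injective iff `U ≇ Σ⁻ᵈ A_{d+1}`. -/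
theorem hom_injective_iff_not_iso_desuspension {C : Type u} [Category.{v} C]
    [Preadditive C] [HasZeroObject C] [HasFiniteBiproducts C]
    (k : Type*) [Field k] [Linear k C]
    [∀ X Y : C, FiniteDimensional k (X ⟶ Y)] [IsIdempotentComplete C]
    {S : C ≌ C} {d : ℕ} [DAngulated C S d]
    (A : DAngle C S d) (hA : A ∈ DAngulated.distinguished (S := S) (d := d))
    (hAR : A.IsAR C) (U : C) (hU : Indecomposable C U) :
    Function.Injective
        (fun g : U ⟶ A.obj ⟨0, Nat.succ_pos _⟩ => g ≫ A.mor ⟨0, Nat.succ_pos _⟩) ↔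
      ¬ Nonempty (U ≅ S.inverse.obj (A.obj ⟨d + 1, Nat.lt_succ_self _⟩)) := by
  classical
  haveI : S.functor.Additive := sAdd S
  have Ld := mor_conn_zero A hA
  have L2 := conn_smor_zero A hA
  -- re-express injectivity via a kernel condition through `P`
  have key : Function.Injective
      (fun g : U ⟶ A.obj ⟨0, Nat.succ_pos _⟩ => g ≫ A.mor ⟨0, Nat.succ_pos _⟩) ↔
      ∀ t : S.functor.obj U ⟶ A.obj ⟨d + 1, Nat.lt_succ_self _⟩, t ≫ A.conn = 0 := by
    constructor
    · intro hinj t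
      set g := S.functor.preimage (t ≫ A.conn) with hgdef
      have hmapg : S.functor.map g = t ≫ A.conn := S.functor.map_preimage _
      have hg0 : g ≫ A.mor ⟨0, Nat.succ_pos _⟩ = 0 := by
        apply S.functor.map_injective
        rw [Functor.map_comp, hmapg, Functor.map_zero, Category.assoc, L2, comp_zero]
      have hgz : g = 0 := hinj (show g ≫ A.mor ⟨0, Nat.succ_pos _⟩ =
        (0 : U ⟶ A.obj ⟨0, Nat.succ_pos _⟩) ≫ A.mor ⟨0, Nat.succ_pos _⟩ by
          rw [hg0, zero_comp])
      rw [← hmapg, hgz, Functor.map_zero]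
    · intro hP g₁ g₂ hgg
      simp only at hgg
      have hsub : (g₁ - g₂) ≫ A.mor ⟨0, Nat.succ_pos _⟩ = 0 := by
        rw [Preadditive.sub_comp, hgg, sub_self]
      have hmap0 : S.functor.map (g₁ - g₂) ≫ S.functor.map (A.mor ⟨0, Nat.succ_pos _⟩) = 0 := by
        rw [← Functor.map_comp, hsub, Functor.map_zero]
      obtain ⟨t, ht⟩ := exact_at_susp A hA (S.functor.map (g₁ - g₂)) hmap0
      have hz : S.functor.map (g₁ - g₂) = 0 := by rw [← ht, hP t]
      have : g₁ - g₂ = 0 := S.functor.map_injective (by rw [hz, Functor.map_zero])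
      exact sub_eq_zero.mp this
  rw [key]
  constructor
  · -- P → not iso
    intro hP hne
    obtain ⟨e⟩ := hne
    have hconn : A.conn = 0 := by
      set t1 : S.functor.obj U ⟶ A.obj ⟨d + 1, Nat.lt_succ_self _⟩ :=
        S.functor.map e.hom ≫ S.counitIso.hom.app (A.obj ⟨d + 1, Nat.lt_succ_self _⟩) with ht1
      haveI : IsIso t1 := by rw [ht1]; infer_instance
      have h := hP t1
      calc A.conn = inv t1 ≫ t1 ≫ A.conn := by rw [IsIso.inv_hom_id_assoc]
      _ = 0 := by rw [h, comp_zero]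
    obtain ⟨w1, hw1⟩ := exact_at_last A hA (𝟙 (A.obj ⟨d + 1, Nat.lt_succ_self _⟩))
      (by rw [hconn, comp_zero])
    exact hAR.2.1.1 ⟨⟨w1, hw1⟩⟩
  · -- not iso → P
    intro hniso t
    by_cases hsp : IsSplitEpi t
    · exfalso
      obtain ⟨⟨se⟩⟩ := hsp
      set Z := S.inverse.obj (A.obj ⟨d + 1, Nat.lt_succ_self _⟩) with hZ
      set uu : U ⟶ Z := S.unitIso.hom.app U ≫ S.inverse.map t with huu
      set vv : Z ⟶ U := S.inverse.map se.section_ ≫ S.unitIso.inv.app U with hvv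
      have hvu : vv ≫ uu = 𝟙 Z := by
        rw [huu, hvv, Category.assoc, Iso.inv_hom_id_app_assoc, ← S.inverse.map_comp, se.id]
        exact S.inverse.map_id _
      rcases isZero_or_isIso_of_splitEpi hU uu vv hvu with hz | hiso
      · -- Z is zero, so A_{d+1} is zero, so mor d is split epi: contradiction
        have hz2 : IsZero (A.obj ⟨d + 1, Nat.lt_succ_self _⟩) := by
          have := S.functor.map_isZero hz
          exact this.of_iso (S.counitIso.app _).symm
        refine hAR.2.1.1 ⟨⟨hz2.to_ _, hz2.eq_of_src _ _⟩⟩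
      · exact hniso ⟨asIso uu⟩
    · obtain ⟨h, hh⟩ := hAR.2.1.2 t hsp
      rw [← hh, Category.assoc, Ld, comp_zero]
end
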